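/- For every non-negative integer n ≥ 1, the number of up-down lattice paths of length 2n starting at (0,0) that never return to height 0 equals binom(2n, n). -/

import Mathlib

open Finset

open scoped Classical

/-- An up-down lattice path, encoded as a `List Bool` with `true` = up step
`(1,1)` and `false` = down step `(1,-1)`. -/
abbrev UDPath := List Bool

/-- No lattice point of the path other than the starting point has height
`0`: every nonempty prefix has unequal numbers of up and down steps. -/
def NeverReturns (w : UDPath) : Prop :=
  ∀ t, 0 < t → t ≤ w.length →
    (w.take t).count true ≠ (w.take t).count false

/-- all lists of bools of length n -/
def allL : ℕ → Finset (List Bool)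
  | 0 => {[]}
  | n+1 => ((allL n) ×ˢ (Finset.univ : Finset Bool)).image (fun p => p.1 ++ [p.2])

lemma mem_allL (n : ℕ) (w : List Bool) : w ∈ allL n ↔ w.length = n := by
  induction n generalizing w with
  | zero => simp [allL, List.length_eq_zero_iff]
  | succ n ih =>
    simp only [allL, mem_image, mem_product, mem_univ, and_true, Prod.exists]
    constructor
    · rintro ⟨v, b, hv, rfl⟩
      simp [(ih v).mp hv]
    · intro h
      have hne : w ≠ [] := by rintro rfl; simp at h
      refine ⟨w.dropLast, w.getLast hne, ?_, List.dropLast_append_getLast hne⟩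
      rw [ih]
      simp [h]

lemma count_tf (l : List Bool) : l.count true + l.count false = l.length := by
  induction l with
  | nil => simp
  | cons b l ih =>
    cases b <;> simp only [List.count_cons, List.length_cons, if_pos, if_neg] <;>
      simp <;> omega

def Nonneg (w : List Bool) : Prop :=
  ∀ t, (w.take t).count false ≤ (w.take t).count true

def PosP (w : List Bool) : Prop :=
  ∀ t, 0 < t → (w.take t).count false < (w.take t).count true

def NegP (w : List Bool) : Prop :=
  ∀ t, 0 < t → (w.take t).count true < (w.take t).count false

lemma nonneg_full {w : List Bool} (h : Nonneg w) : w.count false ≤ w.count true := by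
  have := h w.length
  rwa [List.take_length] at this

lemma nonneg_append (v : List Bool) (b : Bool) :
    Nonneg (v ++ [b]) ↔ Nonneg v ∧ (b = false → v.count false < v.count true) := by
  constructor
  · intro h
    constructor
    · intro t
      rcases le_or_gt t v.length with ht | ht
      · have := h t
        rwa [List.take_append_of_le_length ht] at this
      · have := h v.length
        rw [List.take_append_of_le_length le_rfl, List.take_length] at this
        rw [List.take_of_length_le (le_of_lt ht)]
        exact this
    · rintro rfl
      have := h (v.length + 1)
      rw [List.take_of_length_le (by simp)] at this
      simp [List.count_append] at this
      omega
  · rintro ⟨h1, h2⟩ t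
    rcases le_or_gt t v.length with ht | ht
    · rw [List.take_append_of_le_length ht]; exact h1 t
    · rw [List.take_of_length_le (by simp; omega)]
      have hf := nonneg_full h1
      cases b
      · have := h2 rfl
        simp [List.count_append]; omega
      · simp [List.count_append]; omega

noncomputable def cF (m j : ℕ) : ℕ :=
  ((allL m).filter (fun w => Nonneg w ∧ w.count true = j)).card

lemma cF_zero_of_le (m j : ℕ) (h : 2*j < m) : cF m j = 0 := by
  rw [cF, Finset.card_eq_zero, Finset.filter_eq_empty_iff]
  rintro w hw ⟨h1, h2⟩
  have hl := (mem_allL m w).mp hw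
  have := nonneg_full h1
  have := count_tf w
  omega

lemma append_mem_allL {v : List Bool} {m : ℕ} (hv : v ∈ allL m) (b : Bool) :
    v ++ [b] ∈ allL (m+1) := by
  rw [mem_allL] at hv ⊢
  simp [hv]

lemma cF_succ (m j : ℕ) (h : m + 1 ≤ 2*j) :
    cF (m+1) j = cF m (j-1) + cF m j := by
  have hj : 1 ≤ j := by omega
  have hset : (allL (m+1)).filter (fun w => Nonneg w ∧ w.count true = j) =
      (((allL m).filter (fun w => Nonneg w ∧ w.count true = j-1)).image (· ++ [true])) ∪
      (((allL m).filter (fun w => Nonneg w ∧ w.count true = j)).image (· ++ [false])) := by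
    ext w
    simp only [mem_filter, mem_union, mem_image]
    constructor
    · rintro ⟨hw, h1, h2⟩
      have hl := (mem_allL _ w).mp hw
      have hne : w ≠ [] := by rintro rfl; simp at hl
      obtain ⟨v, b, rfl⟩ : ∃ v b, w = v ++ [b] :=
        ⟨w.dropLast, w.getLast hne, (List.dropLast_append_getLast hne).symm⟩
      have hv : v ∈ allL m := by
        rw [mem_allL]
        have : v.length + 1 = m + 1 := by simpa using hl
        omega
      rw [nonneg_append] at h1
      cases b
      · right
        refine ⟨v, ⟨hv, h1.1, ?_⟩, rfl⟩
        simp [List.count_append] at h2; omega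
      · left
        refine ⟨v, ⟨hv, h1.1, ?_⟩, rfl⟩
        simp [List.count_append] at h2; omega
    · rintro (⟨v, ⟨hv, h1, h2⟩, rfl⟩ | ⟨v, ⟨hv, h1, h2⟩, rfl⟩)
      · refine ⟨append_mem_allL hv _, ?_, ?_⟩
        · rw [nonneg_append]; exact ⟨h1, by simp⟩
        · simp [List.count_append]; omega
      · have hl := (mem_allL _ v).mp hv
        have hc := count_tf v
        refine ⟨append_mem_allL hv _, ?_, ?_⟩
        · rw [nonneg_append]
          exact ⟨h1, fun _ => by omega⟩
        · simp [List.count_append]; omega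
  rw [cF, hset, Finset.card_union_of_disjoint, cF, cF,
    Finset.card_image_of_injective, Finset.card_image_of_injective]
  · exact fun a b hab => by simpa using List.append_inj_left' hab rfl
  · exact fun a b hab => by simpa using List.append_inj_left' hab rfl
  · rw [Finset.disjoint_left]
    rintro w hw1 hw2
    simp only [mem_image] at hw1 hw2
    obtain ⟨v1, _, rfl⟩ := hw1
    obtain ⟨v2, _, h2⟩ := hw2
    have := congrArg List.getLast? h2
    simp at this

lemma choose_down (m i : ℕ) (h : m ≤ 2*i+1) : m.choose (i+1) ≤ m.choose i := by
  rcases le_or_gt m i with hm | hm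
  · rw [Nat.choose_eq_zero_of_lt (by omega)]
    exact Nat.zero_le _
  by_cases hm2 : m = 2*i+1
  · subst hm2
    have := Nat.choose_symm (show i+1 ≤ 2*i+1 by omega)
    have h2 : 2*i+1 - (i+1) = i := by omega
    rw [h2] at this
    omega
  · have h1 : m.choose (i+1) = m.choose (m - (i+1)) := (Nat.choose_symm (by omega)).symm
    have h2 : m.choose i = m.choose (m - i) := (Nat.choose_symm (by omega)).symm
    rw [h1, h2]
    have : m - (i+1) < m / 2 := by omega
    have := Nat.choose_le_succ_of_lt_half_left this
    have hmi : m - (i+1) + 1 = m - i := by omega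
    rwa [hmi] at this

lemma choose_up (n r : ℕ) (h : 2*r < n) : n.choose r ≤ n.choose (r+1) := by
  rcases eq_or_lt_of_le (Nat.succ_le_of_lt h) with he | hlt
  · -- n = 2r+1
    have : n - r = r + 1 := by omega
    rw [← this, Nat.choose_symm (by omega)]
  · exact Nat.choose_le_succ_of_lt_half_left (by omega)

lemma cF_eq (m : ℕ) : ∀ j, cF m j = m.choose j - m.choose (j+1) := by
  induction m with
  | zero =>
    intro j
    match j with
    | 0 =>
      rw [cF]
      have : (allL 0).filter (fun w => Nonneg w ∧ w.count true = 0) = {[]} := by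
        ext w
        simp only [Finset.mem_filter, Finset.mem_singleton, allL]
        constructor
        · tauto
        · rintro rfl
          refine ⟨by simp, fun t => by simp, by simp⟩
      simp [this]
    | j+1 =>
      rw [cF]
      have : (allL 0).filter (fun w => Nonneg w ∧ w.count true = j+1) = ∅ := by
        rw [Finset.filter_eq_empty_iff]
        intro w hw
        simp only [allL, Finset.mem_singleton] at hw
        subst hw
        simp
      simp [this, Nat.choose_eq_zero_of_lt]
  | succ m ih =>
    intro j
    rcases le_or_gt (m+1) (2*j) with h | h
    · obtain ⟨k, rfl⟩ : ∃ k, j = k+1 := ⟨j-1, by omega⟩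
      rw [cF_succ m (k+1) h]
      simp only [Nat.add_sub_cancel]
      rw [ih k, ih (k+1)]
      have hp1 : (m+1).choose (k+1) = m.choose k + m.choose (k+1) := Nat.choose_succ_succ m k
      have hp2 : (m+1).choose (k+1+1) = m.choose (k+1) + m.choose (k+1+1) :=
        Nat.choose_succ_succ m (k+1)
      have hd1 : m.choose (k+1) ≤ m.choose k := choose_down m k (by omega)
      have hd2 : m.choose (k+1+1) ≤ m.choose (k+1) := choose_down m (k+1) (by omega)
      omega
    · rw [cF_zero_of_le (m+1) j h]
      have := choose_up (m+1) j (by omega)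
      omega

lemma tele (f : ℕ → ℕ) (a : ℕ) (hf : ∀ i, a ≤ i → f (i+1) ≤ f i) :
    ∀ n, a ≤ n → ∑ j ∈ Finset.Ico a n, (f j - f (j+1)) = f a - f n := by
  intro n
  induction n with
  | zero => intro h; interval_cases a; simp
  | succ n ihn =>
    intro h
    rcases eq_or_lt_of_le h with he | hlt
    · rw [← he]; simp
    · have han : a ≤ n := by omega
      have anti : ∀ i, a ≤ i → f i ≤ f a := by
        intro i hi
        induction i with
        | zero => interval_cases a; rfl
        | succ i ihi =>
          rcases eq_or_lt_of_le hi with he2 | hlt2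
          · rw [← he2]
          · exact le_trans (hf i (by omega)) (ihi (by omega))
      rw [Finset.sum_Ico_succ_top han, ihn han]
      have := hf n han
      have := anti n han
      omega

lemma sum_cF (m : ℕ) : ∑ j ∈ Finset.range (m+1), cF m j = m.choose ((m+1)/2) := by
  have hsplit : Finset.range (m+1) = Finset.Ico 0 ((m+1)/2) ∪ Finset.Ico ((m+1)/2) (m+1) := by
    rw [Finset.range_eq_Ico, Finset.Ico_union_Ico_eq_Ico (Nat.zero_le _) (by omega)]
  rw [hsplit, Finset.sum_union (by
    rw [Finset.disjoint_left]
    intro x hx hy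
    simp only [Finset.mem_Ico] at hx hy
    omega)]
  have h1 : ∑ j ∈ Finset.Ico 0 ((m+1)/2), cF m j = 0 := by
    apply Finset.sum_eq_zero
    intro j hj
    simp only [Finset.mem_Ico] at hj
    rw [cF_eq]
    have := choose_up m j (by omega)
    omega
  have h2 : ∑ j ∈ Finset.Ico ((m+1)/2) (m+1), cF m j = m.choose ((m+1)/2) := by
    rw [Finset.sum_congr rfl (fun j _ => cF_eq m j),
      tele (m.choose) ((m+1)/2) (fun i hi => choose_down m i (by omega)) (m+1) (by omega)]
    simp [Nat.choose_eq_zero_of_lt]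
  rw [h1, h2, zero_add]

noncomputable def nnC (m : ℕ) : ℕ := ((allL m).filter Nonneg).card

lemma nnC_eq (m : ℕ) : nnC m = m.choose ((m+1)/2) := by
  rw [← sum_cF, nnC]
  rw [Finset.card_eq_sum_card_fiberwise (f := fun w => w.count true)
    (t := Finset.range (m+1)) (fun w hw => by
      simp only [mem_filter, Finset.mem_coe, Finset.coe_filter, Set.mem_setOf_eq] at hw
      have hl := (mem_allL m w).mp hw.1
      have : w.count true ≤ w.length := List.count_le_length
      simp only [Finset.mem_coe, Finset.mem_range]
      omega)]
  apply Finset.sum_congr rfl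
  intro j _
  rw [cF, Finset.filter_filter]

noncomputable def posC (m : ℕ) : ℕ := ((allL m).filter PosP).card
noncomputable def negC (m : ℕ) : ℕ := ((allL m).filter NegP).card

lemma pos_cons (v : List Bool) : PosP (true :: v) ↔ Nonneg v := by
  constructor
  · intro h t
    have := h (t+1) (by omega)
    rw [List.take_succ_cons, List.count_cons, List.count_cons] at this
    simp only [beq_iff_eq, reduceCtorEq, if_false, if_true, if_pos] at this
    omega
  · intro h t ht
    obtain ⟨s, rfl⟩ : ∃ s, t = s+1 := ⟨t-1, by omega⟩
    have := h s
    rw [List.take_succ_cons, List.count_cons, List.count_cons]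
    simp only [beq_iff_eq, reduceCtorEq, if_false, if_true, if_pos]
    omega

lemma pos_head (b : Bool) (v : List Bool) (h : PosP (b :: v)) : b = true := by
  have := h 1 (by omega)
  cases b
  · simp [List.take_succ_cons] at this
  · rfl

lemma filter_pos_eq (m : ℕ) :
    (allL (m+1)).filter PosP = ((allL m).filter Nonneg).image (true :: ·) := by
  ext w
  simp only [mem_filter, mem_image]
  constructor
  · rintro ⟨hw, hp⟩
    have hl := (mem_allL _ w).mp hw
    match w with
    | [] => simp at hl
    | b :: v =>
      have hb := pos_head b v hp
      subst hb
      refine ⟨v, ⟨?_, (pos_cons v).mp hp⟩, rfl⟩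
      rw [mem_allL]
      simpa using hl
  · rintro ⟨v, ⟨hv, hnn⟩, rfl⟩
    refine ⟨?_, (pos_cons v).mpr hnn⟩
    rw [mem_allL]
    simp [(mem_allL _ v).mp hv]

lemma posC_eq (m : ℕ) : posC (m+1) = nnC m := by
  rw [posC, filter_pos_eq, nnC]
  exact Finset.card_image_of_injective _ (fun a b h => by simpa using h)

lemma count_map_not (l : List Bool) (b : Bool) : (l.map not).count b = l.count (!b) := by
  induction l with
  | nil => simp
  | cons a l ih =>
    cases a <;> cases b <;> simp [List.count_cons, ih]

lemma neg_iff_pos_map (w : List Bool) : NegP w ↔ PosP (w.map not) := by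
  constructor
  · intro h t ht
    rw [← List.map_take, count_map_not, count_map_not]
    simpa using h t ht
  · intro h t ht
    have := h t ht
    rw [← List.map_take, count_map_not, count_map_not] at this
    simpa using this

lemma map_not_invol (l : List Bool) : (l.map not).map not = l := by
  induction l with
  | nil => simp
  | cons a l ih => simp [ih]

lemma negC_eq_posC (m : ℕ) : negC m = posC m := by
  rw [negC, posC]
  have : (allL m).filter NegP = ((allL m).filter PosP).image (List.map not) := by
    ext w
    simp only [mem_filter, mem_image]
    constructor
    · rintro ⟨hw, hn⟩
      refine ⟨w.map not, ⟨?_, ?_⟩, map_not_invol w⟩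
      · rw [mem_allL]; simp [(mem_allL _ w).mp hw]
      · exact (neg_iff_pos_map w).mp hn
    · rintro ⟨v, ⟨hv, hp⟩, rfl⟩
      refine ⟨?_, ?_⟩
      · rw [mem_allL]; simp [(mem_allL _ v).mp hv]
      · rw [neg_iff_pos_map, map_not_invol]
        exact hp
  rw [this, Finset.card_image_of_injective]
  · intro a b h
    have := congrArg (List.map not) h
    rwa [map_not_invol, map_not_invol] at this

lemma nr_map_not (w : List Bool) (h : NeverReturns w) : NeverReturns (w.map not) := by
  intro t ht hle
  rw [List.length_map] at hle
  rw [← List.map_take, count_map_not, count_map_not]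
  simp only [Bool.not_true, Bool.not_false]
  exact (h t ht hle).symm

lemma nr_pos (v : List Bool) (h : NeverReturns (true :: v)) : PosP (true :: v) := by
  intro t ht
  induction t with
  | zero => omega
  | succ t ih =>
    rcases Nat.eq_zero_or_pos t with rfl | htpos
    · simp [List.take_succ_cons]
    · have ihh := ih htpos
      rcases le_or_gt (true :: v).length t with hlen | hlen
      · rw [List.take_of_length_le (le_trans hlen (Nat.le_succ t))]
        rw [List.take_of_length_le hlen] at ihh
        exact ihh
      · have hsucc : (true :: v).take (t+1) = (true :: v).take t ++ [(true :: v)[t]] := by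
          rw [List.take_succ, List.getElem?_eq_getElem hlen]
          rfl
        have hne := h (t+1) (by omega) (by omega)
        rw [hsucc] at hne ⊢
        rw [List.count_append, List.count_append] at hne ⊢
        cases hw : (true :: v)[t] <;> simp [hw] at hne ⊢ <;> omega

lemma nr_iff (b : Bool) (v : List Bool) :
    NeverReturns (b :: v) ↔ (PosP (b :: v) ∨ NegP (b :: v)) := by
  constructor
  · intro h
    cases b
    · right
      have h2 := nr_map_not _ h
      simp only [List.map_cons, Bool.not_false] at h2
      have := nr_pos _ h2
      rw [neg_iff_pos_map]
      simpa using this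
    · exact Or.inl (nr_pos v h)
  · rintro (hp | hn) <;> intro t ht hle
    · exact (hp t ht).ne'
    · exact (hn t ht).ne

theorem never_return_count (n : ℕ) (hn : 1 ≤ n) :
    Nat.card {w : UDPath // w.length = 2 * n ∧ NeverReturns w} =
      Nat.choose (2 * n) n := by
  have hcard : Nat.card {w : UDPath // w.length = 2 * n ∧ NeverReturns w} =
      ((allL (2*n)).filter NeverReturns).card := by
    rw [← Nat.card_eq_finsetCard]
    apply Nat.card_congr
    apply Equiv.subtypeEquivRight
    intro w
    simp only [Finset.mem_filter, mem_allL]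
  have hfil : (allL (2*n)).filter NeverReturns =
      (allL (2*n)).filter PosP ∪ (allL (2*n)).filter NegP := by
    rw [← Finset.filter_or]
    apply Finset.filter_congr
    intro w hw
    have hl := (mem_allL _ w).mp hw
    match w with
    | [] => exfalso; simp at hl; omega
    | b :: v => exact nr_iff b v
  have hdisj : Disjoint ((allL (2*n)).filter PosP) ((allL (2*n)).filter NegP) := by
    rw [Finset.disjoint_left]
    intro w h1 h2
    simp only [mem_filter] at h1 h2
    have ha := h1.2 1 one_pos
    have hb := h2.2 1 one_pos
    omega
  have hpos : posC (2*n) = (2*n-1).choose n := by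
    have h2n : 2*n = (2*n-1)+1 := by omega
    rw [h2n, posC_eq, nnC_eq]
    congr 1
    omega
  have hbin : (2*n).choose n = 2 * (2*n-1).choose n := by
    obtain ⟨k, rfl⟩ : ∃ k, n = k+1 := ⟨n-1, by omega⟩
    have h1 : 2*(k+1) = (2*k+1)+1 := by ring
    have h2 : 2*(k+1)-1 = 2*k+1 := by omega
    rw [h2, h1, Nat.choose_succ_succ]
    simp only [Nat.succ_eq_add_one]
    have hsym : (2*k+1).choose k = (2*k+1).choose (k+1) := by
      have := Nat.choose_symm (show k+1 ≤ 2*k+1 by omega)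
      rwa [show 2*k+1-(k+1) = k by omega] at this
    omega
  rw [hcard, hfil, Finset.card_union_of_disjoint hdisj]
  have e1 : ((allL (2*n)).filter PosP).card = posC (2*n) := rfl
  have e2 : ((allL (2*n)).filter NegP).card = negC (2*n) := rfl
  rw [e1, e2, negC_eq_posC, hpos, hbin]
  ring
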